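/- dim(P_{k-2}(T; 𝕂) ∩ ker(x)) = dim P_{k-2}(T; 𝕂) + dim ∇P_k(T) − dim P_{k-1}(T; ℝ^d), where the dimensions are over a d-dimensional simplex; explicitly, dim ∇P_k(T) = C(k+d, d) − 1, dim P_{k-1}(T; ℝ^d) = d·C(k-1+d, d), dim P_{k-2}(T; 𝕂) = (d(d−1)/2)·C(k-2+d, d). -/

import Mathlib

open MvPolynomial

/-- The space `P_m(T; 𝕂) ∩ ker(x)`: antisymmetric-matrix-valued polynomials of
total degree at most `m` in `d` variables with `τ(x)x = 0`. -/
noncomputable def antisymKerX (d m : ℕ) :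
    Submodule ℝ (Matrix (Fin d) (Fin d) (MvPolynomial (Fin d) ℝ)) where
  carrier := {τ | (∀ i j, (τ i j).totalDegree ≤ m) ∧ (∀ i j, τ j i = - τ i j) ∧
    ∀ j, ∑ i : Fin d, τ j i * X i = 0}
  zero_mem' := by
    refine ⟨fun i j => by simp, fun i j => by simp, fun j => by simp⟩
  add_mem' := by
    rintro a b ⟨ha1, ha2, ha3⟩ ⟨hb1, hb2, hb3⟩
    refine ⟨fun i j => ?_, fun i j => ?_, fun j => ?_⟩
    · exact le_trans (totalDegree_add _ _) (max_le (ha1 i j) (hb1 i j))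
    · simp only [Matrix.add_apply, ha2 i j, hb2 i j]; ring
    · simp only [Matrix.add_apply, add_mul]
      rw [Finset.sum_add_distrib, ha3 j, hb3 j, add_zero]
  smul_mem' := by
    rintro c a ⟨ha1, ha2, ha3⟩
    refine ⟨fun i j => ?_, fun i j => ?_, fun j => ?_⟩
    · exact le_trans (totalDegree_smul_le c (a i j)) (ha1 i j)
    · simp only [Matrix.smul_apply, ha2 i j, smul_neg]
    · simp only [Matrix.smul_apply, smul_mul_assoc]
      rw [← Finset.smul_sum, ha3 j, smul_zero]

namespace FEEC

lemma card_filterMap_id_le {α : Type*} (s : Multiset (Option α)) :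
    Multiset.card (s.filterMap id) ≤ Multiset.card s := by
  induction s using Multiset.induction_on with
  | empty => simp
  | cons a t ih =>
    cases a with
    | none => rw [Multiset.filterMap_cons_none _ _ rfl]; simp only [Multiset.card_cons]; omega
    | some x =>
      rw [Multiset.filterMap_cons_some id (some x) t rfl]
      simp only [Multiset.card_cons]; omega

lemma multiset_recon {α : Type*} (s : Multiset (Option α)) :
    Multiset.map some (s.filterMap id) +
      Multiset.replicate (Multiset.card s - Multiset.card (s.filterMap id)) none = s := by
  induction s using Multiset.induction_on with
  | empty => simp
  | cons a t ih =>
    cases a with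
    | none =>
      rw [Multiset.filterMap_cons_none _ _ rfl, Multiset.card_cons,
        Nat.succ_sub (card_filterMap_id_le t), Multiset.replicate_succ,
        Multiset.add_cons, ih]
    | some x =>
      rw [Multiset.filterMap_cons_some id (some x) t rfl, Multiset.card_cons, Multiset.card_cons,
        Multiset.map_cons, Multiset.cons_add, Nat.succ_sub_succ, ih]

/-- drop trailing `none`s -/
lemma filterMap_id_add_replicate_none {α : Type*} (x : Multiset (Option α)) (k : ℕ) :
    Multiset.filterMap id (x + Multiset.replicate k none) = Multiset.filterMap id x := by
  induction k with
  | zero => simp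
  | succ n ih =>
    rw [Multiset.replicate_succ, Multiset.add_cons, Multiset.filterMap_cons_none _ _ rfl, ih]

def optionEquiv {α : Type*} (m : ℕ) :
    {M : Multiset α // Multiset.card M ≤ m} ≃ Sym (Option α) m where
  toFun M := ⟨M.1.map some + Multiset.replicate (m - Multiset.card M.1) none, by
    have := M.2
    simp only [Multiset.card_add, Multiset.card_map, Multiset.card_replicate]
    omega⟩
  invFun S := ⟨S.1.filterMap id, by
    have h2 := card_filterMap_id_le S.1
    have h3 : Multiset.card S.1 = m := S.2
    omega⟩
  left_inv M := by
    apply Subtype.ext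
    simp only
    rw [filterMap_id_add_replicate_none, Multiset.filterMap_map]
    have h : (id ∘ some : α → Option α) = some ∘ id := rfl
    rw [h, Multiset.filterMap_eq_map, Multiset.map_id]
  right_inv S := by
    apply Subtype.ext
    simp only
    have h3 : Multiset.card S.1 = m := S.2
    rw [show m - Multiset.card (Multiset.filterMap id S.1)
        = Multiset.card S.1 - Multiset.card (Multiset.filterMap id S.1) from by rw [h3]]
    exact multiset_recon S.1

noncomputable def degEquiv (d m : ℕ) : {s : Fin d →₀ ℕ // (s.sum fun _ e => e) ≤ m} ≃ Sym (Option (Fin d)) m :=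
  ((Equiv.subtypeEquiv Multiset.toFinsupp.toEquiv (fun M => by
      rw [show (Multiset.toFinsupp.toEquiv M).sum (fun _ e => e) = Multiset.card M from
        Multiset.toFinsupp_sum_eq M])).symm).trans (optionEquiv m)

lemma finrank_P (d m : ℕ) :
    Module.finrank ℝ (restrictTotalDegree (Fin d) ℝ m) = (m + d).choose d := by
  letI : Fintype ↥{n : Fin d →₀ ℕ | (n.sum fun _ e => e) ≤ m} :=
    Fintype.ofEquiv _ (degEquiv d m).symm
  have b := basisRestrictSupport ℝ {n : Fin d →₀ ℕ | (n.sum fun _ e => e) ≤ m}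
  have h1 : Module.finrank ℝ (restrictTotalDegree (Fin d) ℝ m)
      = Fintype.card ↥{n : Fin d →₀ ℕ | (n.sum fun _ e => e) ≤ m} :=
    Module.finrank_eq_card_basis b
  have h2 : Fintype.card ↥{n : Fin d →₀ ℕ | (n.sum fun _ e => e) ≤ m}
      = Fintype.card (Sym (Option (Fin d)) m) := Fintype.card_congr (degEquiv d m)
  rw [h1, h2, Sym.card_sym_eq_choose]
  have : Fintype.card (Option (Fin d)) + m - 1 = m + d := by
    simp [Fintype.card_option, Fintype.card_fin]; omega
  rw [this, ← Nat.choose_symm (show m ≤ m + d by omega)]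
  congr 1
  omega


variable {d : ℕ}

/-- total weight of a multi-index -/
def W (s : Fin d →₀ ℕ) : ℕ := s.sum fun _ e => e

lemma W_eq_sum (s : Fin d →₀ ℕ) : W s = ∑ i ∈ s.support, s i := rfl

lemma sub_add_single {t : Fin d →₀ ℕ} {i : Fin d} (h : t i ≠ 0) :
    t - Finsupp.single i 1 + Finsupp.single i 1 = t := by
  ext a
  simp only [Finsupp.add_apply, Finsupp.tsub_apply, Finsupp.single_apply]
  split_ifs with h'
  · subst h'; omega
  · omega

lemma sub_single_apply_self {t : Fin d →₀ ℕ} {i : Fin d} :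
    (t - Finsupp.single i (1 : ℕ)) i = t i - 1 := by
  simp [Finsupp.tsub_apply]

lemma sub_single_apply_ne {t : Fin d →₀ ℕ} {i j : Fin d} (h : i ≠ j) :
    (t - Finsupp.single i (1 : ℕ)) j = t j := by
  simp [Finsupp.tsub_apply, Finsupp.single_apply, h]

lemma sub_add_comm_single {t : Fin d →₀ ℕ} {i j : Fin d} (h : i ≠ j) :
    t - Finsupp.single i 1 + Finsupp.single j 1
      = t + Finsupp.single j 1 - Finsupp.single i 1 := by
  ext a
  simp only [Finsupp.add_apply, Finsupp.tsub_apply, Finsupp.single_apply]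
  split_ifs with h1 h2 h3
  · exact absurd (h1.trans h2.symm) h
  · omega
  · omega
  · omega

lemma W_add_single (t : Fin d →₀ ℕ) (i : Fin d) :
    W (t + Finsupp.single i 1) = W t + 1 := by
  rw [W, Finsupp.sum_add_index' (fun _ => rfl) (fun _ _ _ => rfl),
    Finsupp.sum_single_index rfl]
  rfl

lemma W_sub_single {t : Fin d →₀ ℕ} {i : Fin d} (h : t i ≠ 0) :
    W (t - Finsupp.single i 1) + 1 = W t := by
  conv_rhs => rw [← sub_add_single h]
  rw [W_add_single]

lemma W_eq_zero {t : Fin d →₀ ℕ} (h : W t = 0) : t = 0 := by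
  ext a
  simp only [Finsupp.coe_zero, Pi.zero_apply]
  by_contra ha
  have h1 : t a ≤ W t := by
    rw [W_eq_sum]
    exact Finset.single_le_sum (fun _ _ => Nat.zero_le _) (Finsupp.mem_support_iff.mpr ha)
  omega

lemma coeff_zero_of_deg {p : MvPolynomial (Fin d) ℝ} {m : ℕ} (h : p.totalDegree ≤ m)
    {t : Fin d →₀ ℕ} (ht : m < W t) : coeff t p = 0 :=
  coeff_eq_zero_of_totalDegree_lt (lt_of_le_of_lt h ht)

lemma totalDegree_le_of_coeff {p : MvPolynomial (Fin d) ℝ} {m : ℕ}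
    (h : ∀ t, m < W t → coeff t p = 0) : p.totalDegree ≤ m := by
  refine Finset.sup_le fun s hs => ?_
  by_contra h'
  apply mem_support_iff.mp hs
  apply h
  have hws : W s = s.sum fun _ e => e := rfl
  omega

lemma coeff_pderiv (i : Fin d) (p : MvPolynomial (Fin d) ℝ) (s : Fin d →₀ ℕ) :
    coeff s (pderiv i p) = ((s i + 1 : ℕ) : ℝ) * coeff (s + Finsupp.single i 1) p := by
  induction p using MvPolynomial.induction_on' with
  | add p q hp hq => simp only [map_add, coeff_add, hp, hq]; ring
  | monomial t a =>
    rw [pderiv_monomial]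
    rw [coeff_monomial, coeff_monomial]
    rcases eq_or_ne t (s + Finsupp.single i 1) with rfl | h
    · rw [if_pos rfl, if_pos]
      · have h2 : (s + Finsupp.single i (1 : ℕ)) i = s i + 1 := by
          simp [Finsupp.add_apply, Finsupp.single_apply]
        rw [h2]
        push_cast
        ring
      · rw [add_tsub_cancel_right]
    · rw [if_neg h, mul_zero]
      rcases eq_or_ne (t i) 0 with h0 | h0
      · split_ifs <;> simp [h0]
      · rw [if_neg]
        intro hc
        apply h
        rw [← hc, sub_add_single h0]

/-- inverse-degree-weighting operator -/
noncomputable def Dop (c : ℕ) (p : MvPolynomial (Fin d) ℝ) : MvPolynomial (Fin d) ℝ :=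
  ∑ s ∈ p.support, ((W s + c : ℕ) : ℝ)⁻¹ • (monomial s (coeff s p))

lemma coeff_Dop (c : ℕ) (p : MvPolynomial (Fin d) ℝ) (t : Fin d →₀ ℕ) :
    coeff t (Dop c p) = ((W t + c : ℕ) : ℝ)⁻¹ * coeff t p := by
  classical
  rw [Dop, coeff_sum]
  have hc : ∀ s ∈ p.support, coeff t (((W s + c : ℕ) : ℝ)⁻¹ • monomial s (coeff s p))
      = if s = t then ((W t + c : ℕ) : ℝ)⁻¹ * coeff t p else 0 := by
    intro s _
    rw [coeff_smul, coeff_monomial, smul_eq_mul]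
    split_ifs with h
    · subst h; rfl
    · rw [mul_zero]
  rw [Finset.sum_congr rfl hc, Finset.sum_ite_eq' p.support t]
  split_ifs with h
  · rfl
  · rw [notMem_support_iff.mp h, mul_zero]

lemma support_add_single (t : Fin d →₀ ℕ) (j : Fin d) :
    (t + Finsupp.single j 1).support = insert j t.support := by
  ext a
  simp only [Finsupp.mem_support_iff, Finset.mem_insert, Finsupp.add_apply,
    Finsupp.single_apply]
  split_ifs with h1
  · constructor
    · intro _; exact Or.inl h1.symm
    · intro _; omega
  · constructor
    · intro hh; exact Or.inr (by omega)
    · intro hh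
      rcases hh with hh | hh
      · exact absurd hh.symm h1
      · omega

lemma sum_cast_support (t : Fin d →₀ ℕ) :
    ∑ i ∈ t.support, ((t i : ℕ) : ℝ) = ((W t : ℕ) : ℝ) := by
  rw [W_eq_sum]
  push_cast
  rfl

lemma euler_exists (m : ℕ) (p : MvPolynomial (Fin d) ℝ) (hdeg : p.totalDegree ≤ m + 1)
    (h0 : coeff 0 p = 0) :
    ∃ v : Fin d → MvPolynomial (Fin d) ℝ,
      (∀ i, (v i).totalDegree ≤ m) ∧ ∑ i, v i * X i = p := by
  classical
  refine ⟨fun i => Dop 1 (pderiv i p), fun i => ?_, ?_⟩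
  · apply totalDegree_le_of_coeff
    intro t ht
    rw [coeff_Dop, coeff_pderiv,
      coeff_zero_of_deg hdeg (by rw [W_add_single]; omega), mul_zero, mul_zero]
  · apply MvPolynomial.ext
    intro t
    rw [coeff_sum]
    have h1 : ∀ i ∈ (Finset.univ : Finset (Fin d)), coeff t (Dop 1 (pderiv i p) * X i)
        = if i ∈ t.support then
            ((t i : ℕ) : ℝ) * (((W t : ℕ) : ℝ)⁻¹ * coeff t p) else 0 := by
      intro i _
      rw [coeff_mul_X']
      split_ifs with h
      · have hti : t i ≠ 0 := Finsupp.mem_support_iff.mp h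
        rw [coeff_Dop, coeff_pderiv, sub_add_single hti, sub_single_apply_self,
          show t i - 1 + 1 = t i by omega, W_sub_single hti]
        ring
      · rfl
    rw [Finset.sum_congr rfl h1, Finset.sum_ite_mem, Finset.univ_inter]
    rcases eq_or_ne (W t) 0 with hW | hW
    · have ht0 : t = 0 := W_eq_zero hW
      subst ht0
      simp [h0]
    · rw [← Finset.sum_mul, sum_cast_support, ← mul_assoc,
        mul_inv_cancel₀ (by exact_mod_cast hW), one_mul]

lemma koszul_exists (m : ℕ) (v : Fin d → MvPolynomial (Fin d) ℝ)
    (hdeg : ∀ i, (v i).totalDegree ≤ m + 1) (hv : ∑ i, v i * X i = 0) :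
    ∃ τ : Matrix (Fin d) (Fin d) (MvPolynomial (Fin d) ℝ),
      (∀ i j, (τ i j).totalDegree ≤ m) ∧ (∀ i j, τ j i = - τ i j) ∧
      ∀ j, ∑ i, τ j i * X i = v j := by
  classical
  refine ⟨fun j i => Dop 2 (pderiv i (v j) - pderiv j (v i)), fun i j => ?_, fun i j => ?_, ?_⟩
  · -- degree bound
    apply totalDegree_le_of_coeff
    intro t ht
    rw [coeff_Dop, coeff_sub, coeff_pderiv, coeff_pderiv,
      coeff_zero_of_deg (hdeg _) (by rw [W_add_single]; omega),
      coeff_zero_of_deg (hdeg _) (by rw [W_add_single]; omega)]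
    ring
  · -- antisymmetry
    apply MvPolynomial.ext
    intro t
    rw [coeff_neg, coeff_Dop, coeff_Dop, coeff_sub, coeff_sub]
    ring
  · -- main identity
    intro j
    apply MvPolynomial.ext
    intro t
    set c := coeff t (v j) with hc
    -- the divergence-free relation at index t + e_j
    have hrel0 : coeff (t + Finsupp.single j 1) (∑ i, v i * X i) = 0 := by
      rw [hv, coeff_zero]
    rw [coeff_sum] at hrel0
    rw [Finset.sum_congr rfl (fun i (_ : i ∈ Finset.univ) =>
      coeff_mul_X' (t + Finsupp.single j 1) i (v i)), Finset.sum_ite_mem,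
      Finset.univ_inter, support_add_single,
      ← Finset.add_sum_erase _ _ (Finset.mem_insert_self j t.support),
      Finset.erase_insert_eq_erase, add_tsub_cancel_right] at hrel0
    -- hrel0 : coeff t (v j) + ∑ i ∈ t.support.erase j, coeff (t + e_j - e_i) (v i) = 0
    have hsumg : ∑ i ∈ t.support.erase j,
        coeff (t + Finsupp.single j 1 - Finsupp.single i 1) (v i) = -c := by
      rw [hc]; linarith [hrel0]
    -- compute the coefficients of the main sum
    rw [coeff_sum]
    rw [Finset.sum_congr rfl (fun i (_ : i ∈ Finset.univ) => coeff_mul_X' t i _),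
      Finset.sum_ite_mem, Finset.univ_inter]
    have hmain : ∀ i ∈ t.support.erase j,
        coeff (t - Finsupp.single i 1) (Dop 2 (pderiv i (v j) - pderiv j (v i)))
          = ((W t + 1 : ℕ) : ℝ)⁻¹ * (((t i : ℕ) : ℝ) * c
              - (((t j : ℕ) : ℝ) + 1)
                * coeff (t + Finsupp.single j 1 - Finsupp.single i 1) (v i)) := by
      intro i hi
      have hij : i ≠ j := Finset.ne_of_mem_erase hi
      have hti : t i ≠ 0 := Finsupp.mem_support_iff.mp (Finset.mem_of_mem_erase hi)
      rw [coeff_Dop, coeff_sub, coeff_pderiv, coeff_pderiv, sub_add_single hti,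
        sub_single_apply_self, show t i - 1 + 1 = t i by omega,
        sub_single_apply_ne hij, sub_add_comm_single hij,
        show W (t - Finsupp.single i 1) + 2 = W t + 1 by
          have := W_sub_single hti; omega]
      push_cast
      ring
    have hjj : coeff (t - Finsupp.single j 1)
        (Dop 2 (pderiv j (v j) - pderiv j (v j))) = 0 := by
      rw [sub_self, coeff_Dop]
      simp
    have hS : ∑ i ∈ t.support.erase j, ((t i : ℕ) : ℝ)
        = ((W t : ℕ) : ℝ) - ((t j : ℕ) : ℝ) := by
      by_cases hjt : j ∈ t.support
      · have h2 := Finset.add_sum_erase t.support (fun i => ((t i : ℕ) : ℝ)) hjt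
        rw [sum_cast_support] at h2
        linarith
      · rw [Finset.erase_eq_of_notMem hjt, sum_cast_support,
          Finsupp.notMem_support_iff.mp hjt]
        simp
    have hgoal : ∑ i ∈ t.support.erase j,
        coeff (t - Finsupp.single i 1) (Dop 2 (pderiv i (v j) - pderiv j (v i))) = c := by
      rw [Finset.sum_congr rfl hmain, ← Finset.mul_sum, Finset.sum_sub_distrib,
        ← Finset.sum_mul, ← Finset.mul_sum, hS, hsumg]
      have hne : ((W t + 1 : ℕ) : ℝ) ≠ 0 := Nat.cast_ne_zero.mpr (by omega)
      push_cast at hne ⊢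
      field_simp
      ring
    by_cases hjt : j ∈ t.support
    · rw [← Finset.add_sum_erase _ _ hjt, hjj, zero_add, hgoal]
    · rw [show t.support = t.support.erase j from (Finset.erase_eq_of_notMem hjt).symm, hgoal]

noncomputable section

/-- the map `v ↦ v ⬝ x` -/
def psiMap (d : ℕ) : (Fin d → MvPolynomial (Fin d) ℝ) →ₗ[ℝ] MvPolynomial (Fin d) ℝ where
  toFun v := ∑ i, v i * X i
  map_add' a b := by simp [add_mul, Finset.sum_add_distrib]
  map_smul' r a := by simp [smul_mul_assoc, Finset.smul_sum]

/-- the map `τ ↦ τ x` -/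
def phiMap (d : ℕ) :
    Matrix (Fin d) (Fin d) (MvPolynomial (Fin d) ℝ) →ₗ[ℝ] (Fin d → MvPolynomial (Fin d) ℝ) where
  toFun τ := fun j => ∑ i, τ j i * X i
  map_add' a b := by
    funext j
    simp [Matrix.add_apply, add_mul, Finset.sum_add_distrib]
  map_smul' r a := by
    funext j
    simp [Matrix.smul_apply, smul_mul_assoc, Finset.smul_sum]

/-- constant coefficient as a linear map -/
def epsMap (d : ℕ) : MvPolynomial (Fin d) ℝ →ₗ[ℝ] ℝ where
  toFun p := coeff 0 p
  map_add' a b := coeff_add _ _ _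
  map_smul' r a := coeff_smul _ _ _

/-- vector-valued polynomials of degree at most m -/
def Vm (d m : ℕ) : Submodule ℝ (Fin d → MvPolynomial (Fin d) ℝ) :=
  Submodule.pi Set.univ fun _ => restrictTotalDegree (Fin d) ℝ m

/-- antisymmetric matrix polynomials of degree at most m -/
def Am (d m : ℕ) : Submodule ℝ (Matrix (Fin d) (Fin d) (MvPolynomial (Fin d) ℝ)) where
  carrier := {τ | (∀ i j, (τ i j).totalDegree ≤ m) ∧ (∀ i j, τ j i = - τ i j)}
  zero_mem' := ⟨fun i j => by simp, fun i j => by simp⟩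
  add_mem' := by
    rintro a b ⟨ha1, ha2⟩ ⟨hb1, hb2⟩
    refine ⟨fun i j => ?_, fun i j => ?_⟩
    · exact le_trans (totalDegree_add _ _) (max_le (ha1 i j) (hb1 i j))
    · simp only [Matrix.add_apply, ha2 i j, hb2 i j]; ring
  smul_mem' := by
    rintro c a ⟨ha1, ha2⟩
    refine ⟨fun i j => ?_, fun i j => ?_⟩
    · exact le_trans (totalDegree_smul_le c (a i j)) (ha1 i j)
    · simp only [Matrix.smul_apply, ha2 i j, smul_neg]

instance (d m : ℕ) : Module.Free ℝ (restrictTotalDegree (Fin d) ℝ m) :=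
  Module.Free.of_basis (basisRestrictSupport ℝ _)

/-- `Vm` is equivalent to a product of copies of `P_m`. -/
def vmEquiv (d m : ℕ) :
    Vm d m ≃ₗ[ℝ] (Fin d → restrictTotalDegree (Fin d) ℝ m) where
  toFun v := fun i => ⟨v.1 i, v.2 i (Set.mem_univ i)⟩
  map_add' a b := rfl
  map_smul' r a := rfl
  invFun f := ⟨fun i => (f i).1, fun i _ => (f i).2⟩
  left_inv v := rfl
  right_inv f := rfl

/-- index type for strictly-upper-triangular entries -/
def uppEquiv (d : ℕ) : {p : Fin d × Fin d // p.1 < p.2} ≃ (Σ j : Fin d, Fin j.1) where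
  toFun p := ⟨p.1.2, ⟨p.1.1.1, p.2⟩⟩
  invFun x := ⟨(⟨x.2.1, lt_trans x.2.2 x.1.2⟩, x.1), x.2.2⟩
  left_inv p := rfl
  right_inv x := rfl

lemma card_upp (d : ℕ) : Fintype.card {p : Fin d × Fin d // p.1 < p.2} = d * (d - 1) / 2 := by
  rw [Fintype.card_congr (uppEquiv d), Fintype.card_sigma]
  simp only [Fintype.card_fin]
  rw [Fin.sum_univ_eq_sum_range (fun i => i) d, Finset.sum_range_id]

/-- `Am` is equivalent to a product of copies of `P_m` indexed by pairs `i < j`. -/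
def amEquiv (d m : ℕ) :
    Am d m ≃ₗ[ℝ] ({p : Fin d × Fin d // p.1 < p.2} → restrictTotalDegree (Fin d) ℝ m) where
  toFun τ := fun q => ⟨τ.1 q.1.1 q.1.2, (mem_restrictTotalDegree _ _ _).mpr (τ.2.1 _ _)⟩
  map_add' a b := rfl
  map_smul' r a := rfl
  invFun f := ⟨fun i j =>
      if h : i < j then (f ⟨(i, j), h⟩ : MvPolynomial (Fin d) ℝ)
      else if h' : j < i then -(f ⟨(j, i), h'⟩ : MvPolynomial (Fin d) ℝ) else 0, by
    constructor
    · intro i j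
      dsimp only
      split_ifs with h h'
      · exact (mem_restrictTotalDegree _ _ _).mp (f ⟨(i, j), h⟩).2
      · rw [totalDegree_neg]
        exact (mem_restrictTotalDegree _ _ _).mp (f ⟨(j, i), h'⟩).2
      · simp
    · intro i j
      dsimp only
      rcases lt_trichotomy i j with h | h | h
      · rw [dif_neg (asymm h), dif_pos h, dif_pos h]
      · subst h
        rw [dif_neg (lt_irrefl i), dif_neg (lt_irrefl i), neg_zero]
      · rw [dif_pos h, dif_neg (asymm h), dif_pos h, neg_neg]⟩  
  left_inv τ := by
    apply Subtype.ext
    funext i j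
    dsimp only
    rcases lt_trichotomy i j with h | h | h
    · rw [dif_pos h]
    · subst h
      rw [dif_neg (lt_irrefl i), dif_neg (lt_irrefl i)]
      have h2 := τ.2.2 i i
      have h3 : τ.1 i i + τ.1 i i = 0 := by
        nth_rewrite 1 [h2]
        rw [neg_add_cancel]
      have h4 : (2 : MvPolynomial (Fin d) ℝ) * τ.1 i i = 0 := by
        rw [two_mul]; exact h3
      have h5 := (mul_eq_zero.mp h4).resolve_left (by norm_num)
      rw [h5]
    · rw [dif_neg (asymm h), dif_pos h, τ.2.2 j i]
  right_inv f := by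
    funext q
    apply Subtype.ext
    obtain ⟨⟨i, j⟩, h⟩ := q
    dsimp only
    rw [dif_pos h]

instance (d m : ℕ) : FiniteDimensional ℝ (Vm d m) :=
  Module.Finite.equiv (vmEquiv d m).symm

instance (d m : ℕ) : FiniteDimensional ℝ (Am d m) :=
  Module.Finite.equiv (amEquiv d m).symm

lemma finrank_Vm (d m : ℕ) :
    Module.finrank ℝ (Vm d m) = d * (m + d).choose d := by
  rw [LinearEquiv.finrank_eq (vmEquiv d m), Module.finrank_pi_fintype, finrank_P]
  simp [Finset.sum_const, Finset.card_univ, mul_comm]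

lemma finrank_Am (d m : ℕ) :
    Module.finrank ℝ (Am d m) = d * (d - 1) / 2 * (m + d).choose d := by
  rw [LinearEquiv.finrank_eq (amEquiv d m), Module.finrank_pi_fintype, finrank_P]
  simp only [Finset.sum_const, Finset.card_univ, smul_eq_mul, card_upp]

/-- rank–nullity for a restricted map -/
lemma rank_split {V W' : Type*} [AddCommGroup V] [Module ℝ V] [AddCommGroup W'] [Module ℝ W']
    (S : Submodule ℝ V) [FiniteDimensional ℝ S] (f : V →ₗ[ℝ] W') :
    Module.finrank ℝ S
      = Module.finrank ℝ (Submodule.map f S) + Module.finrank ℝ (S ⊓ LinearMap.ker f :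
          Submodule ℝ V) := by
  have h := LinearMap.finrank_range_add_finrank_ker (f.domRestrict S)
  rw [LinearMap.range_domRestrict, LinearMap.ker_domRestrict] at h
  rw [← h]
  congr 1
  rw [← Submodule.finrank_map_subtype_eq S (Submodule.comap S.subtype (LinearMap.ker f)),
    Submodule.map_comap_subtype]

end

lemma eq_zero_of_eq_neg' {d : ℕ} {p : MvPolynomial (Fin d) ℝ} (h : p = -p) : p = 0 := by
  have h3 : p + p = 0 := by nth_rewrite 2 [h]; rw [add_neg_cancel]
  have h4 : (2 : MvPolynomial (Fin d) ℝ) * p = 0 := by rw [two_mul]; exact h3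
  exact (mul_eq_zero.mp h4).resolve_left (by norm_num)

lemma antisymKerX_eq (d m : ℕ) :
    antisymKerX d m = Am d m ⊓ LinearMap.ker (phiMap d) := by
  ext τ
  constructor
  · rintro ⟨h1, h2, h3⟩
    exact ⟨⟨h1, h2⟩, LinearMap.mem_ker.mpr (funext h3)⟩
  · rintro ⟨⟨h1, h2⟩, h3⟩
    exact ⟨h1, h2, fun j => congrFun (LinearMap.mem_ker.mp h3) j⟩

lemma map_phi (d m : ℕ) :
    Submodule.map (phiMap d) (Am d m) = LinearMap.ker (psiMap d) ⊓ Vm d (m + 1) := by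
  ext v
  constructor
  · rintro ⟨τ, ⟨hdeg, hanti⟩, rfl⟩
    refine Submodule.mem_inf.mpr ⟨LinearMap.mem_ker.mpr ?_, Submodule.mem_pi.mpr
      fun j _ => (mem_restrictTotalDegree _ _ _).mpr ?_⟩
    · have hrw : (psiMap d) ((phiMap d) τ) = ∑ j, ∑ i, τ j i * (X i * X j) := by
        show ∑ j, (∑ i, τ j i * X i) * X j = _
        refine Finset.sum_congr rfl fun j _ => ?_
        rw [Finset.sum_mul]
        exact Finset.sum_congr rfl fun i _ => by ring
      rw [hrw]
      apply eq_zero_of_eq_neg'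
      conv_lhs => rw [Finset.sum_comm]
      calc ∑ i : Fin d, ∑ j : Fin d, τ j i * (X i * X j)
          = ∑ i : Fin d, ∑ j : Fin d, -(τ i j * (X j * X i)) := by
            refine Finset.sum_congr rfl fun i _ => Finset.sum_congr rfl fun j _ => ?_
            rw [hanti i j]
            ring
        _ = -∑ j : Fin d, ∑ i : Fin d, τ j i * (X i * X j) := by simp
    · show (∑ i, τ j i * X i).totalDegree ≤ m + 1
      refine le_trans (totalDegree_finset_sum _ _) (Finset.sup_le fun i _ => ?_)
      refine le_trans (totalDegree_mul _ _) ?_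
      rw [totalDegree_X]
      have := hdeg j i
      omega
  · intro hmem
    obtain ⟨h1, h2⟩ := Submodule.mem_inf.mp hmem
    obtain ⟨τ, hτ1, hτ2, hτ3⟩ := koszul_exists m v
      (fun i => (mem_restrictTotalDegree _ _ _).mp (Submodule.mem_pi.mp h2 i (Set.mem_univ i)))
      (LinearMap.mem_ker.mp h1)
    exact ⟨τ, ⟨hτ1, hτ2⟩, funext hτ3⟩

lemma map_psi (d m : ℕ) :
    Submodule.map (psiMap d) (Vm d (m + 1))
      = restrictTotalDegree (Fin d) ℝ (m + 2) ⊓ LinearMap.ker (epsMap d) := by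
  ext p
  constructor
  · rintro ⟨v, hv, rfl⟩
    refine Submodule.mem_inf.mpr ⟨(mem_restrictTotalDegree _ _ _).mpr ?_,
      LinearMap.mem_ker.mpr ?_⟩
    · show (∑ i, v i * X i).totalDegree ≤ m + 2
      refine le_trans (totalDegree_finset_sum _ _) (Finset.sup_le fun i _ => ?_)
      refine le_trans (totalDegree_mul _ _) ?_
      rw [totalDegree_X]
      have := (mem_restrictTotalDegree _ _ _).mp (Submodule.mem_pi.mp hv i (Set.mem_univ i))
      omega
    · show coeff 0 (∑ i, v i * X i) = 0
      rw [coeff_sum]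
      refine Finset.sum_eq_zero fun i _ => ?_
      classical
      rw [coeff_mul_X', if_neg (by simp)]
  · intro hmem
    obtain ⟨h1, h2⟩ := Submodule.mem_inf.mp hmem
    have h2' := LinearMap.mem_ker.mp h2
    obtain ⟨v, hv1, hv2⟩ := euler_exists (m + 1) p
      ((mem_restrictTotalDegree _ _ _).mp h1) h2'
    exact ⟨v, Submodule.mem_pi.mpr fun i _ => (mem_restrictTotalDegree _ _ _).mpr (hv1 i), hv2⟩

lemma map_eps (d K : ℕ) :
    Submodule.map (epsMap d) (restrictTotalDegree (Fin d) ℝ K) = ⊤ := by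
  rw [Submodule.eq_top_iff']
  intro r
  refine ⟨C r, (mem_restrictTotalDegree _ _ _).mpr (by rw [totalDegree_C]; omega), ?_⟩
  show coeff 0 (C r) = r
  simp

end FEEC

theorem finrank_antisymKerX (d k : ℕ) (hd : 1 ≤ d) (hk : 2 ≤ k) :
    (Module.finrank ℝ (antisymKerX d (k - 2)) : ℚ)
      = (d : ℚ) * ((d : ℚ) - 1) / 2 * (Nat.choose (k - 2 + d) d : ℚ)
        + ((Nat.choose (k + d) d : ℚ) - 1)
        - (d : ℚ) * (Nat.choose (k - 1 + d) d : ℚ) := by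
  have h21 : k - 2 + 1 = k - 1 := by omega
  have h22 : k - 2 + 2 = k := by omega
  have hAK : Module.finrank ℝ (antisymKerX d (k - 2))
      = Module.finrank ℝ (FEEC.Am d (k - 2) ⊓ LinearMap.ker (FEEC.phiMap d) :
          Submodule ℝ (Matrix (Fin d) (Fin d) (MvPolynomial (Fin d) ℝ))) := by
    rw [FEEC.antisymKerX_eq]
  have E1 := FEEC.rank_split (FEEC.Am d (k - 2)) (FEEC.phiMap d)
  rw [FEEC.finrank_Am] at E1
  have E3 : Submodule.map (FEEC.phiMap d) (FEEC.Am d (k - 2))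
      = FEEC.Vm d (k - 1) ⊓ LinearMap.ker (FEEC.psiMap d) := by
    rw [FEEC.map_phi d (k - 2), h21, inf_comm]
  rw [E3] at E1
  have E4 := FEEC.rank_split (FEEC.Vm d (k - 1)) (FEEC.psiMap d)
  rw [FEEC.finrank_Vm] at E4
  have E5 : Submodule.map (FEEC.psiMap d) (FEEC.Vm d (k - 1))
      = restrictTotalDegree (Fin d) ℝ k ⊓ LinearMap.ker (FEEC.epsMap d) := by
    rw [← h21, FEEC.map_psi d (k - 2), h22]
  rw [E5] at E4
  have E6 := FEEC.rank_split (restrictTotalDegree (Fin d) ℝ k) (FEEC.epsMap d)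
  rw [FEEC.finrank_P, FEEC.map_eps, finrank_top, Module.finrank_self] at E6
  rw [hAK]
  -- cast the three rank equations to ℚ
  have Q1 : ((d * (d - 1) / 2 : ℕ) : ℚ) * ((Nat.choose (k - 2 + d) d : ℕ) : ℚ)
      = (Module.finrank ℝ (FEEC.Vm d (k - 1) ⊓ LinearMap.ker (FEEC.psiMap d) :
            Submodule ℝ (Fin d → MvPolynomial (Fin d) ℝ)) : ℚ)
        + (Module.finrank ℝ (FEEC.Am d (k - 2) ⊓ LinearMap.ker (FEEC.phiMap d) :
            Submodule ℝ (Matrix (Fin d) (Fin d) (MvPolynomial (Fin d) ℝ))) : ℚ) := by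
    exact_mod_cast E1
  have Q4 : (d : ℚ) * ((Nat.choose (k - 1 + d) d : ℕ) : ℚ)
      = (Module.finrank ℝ (restrictTotalDegree (Fin d) ℝ k ⊓ LinearMap.ker (FEEC.epsMap d) :
            Submodule ℝ (MvPolynomial (Fin d) ℝ)) : ℚ)
        + (Module.finrank ℝ (FEEC.Vm d (k - 1) ⊓ LinearMap.ker (FEEC.psiMap d) :
            Submodule ℝ (Fin d → MvPolynomial (Fin d) ℝ)) : ℚ) := by
    exact_mod_cast E4
  have Q6 : ((Nat.choose (k + d) d : ℕ) : ℚ)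
      = 1 + (Module.finrank ℝ (restrictTotalDegree (Fin d) ℝ k ⊓ LinearMap.ker (FEEC.epsMap d) :
            Submodule ℝ (MvPolynomial (Fin d) ℝ)) : ℚ) := by
    exact_mod_cast E6
  have hc2 : ((d * (d - 1) / 2 : ℕ) : ℚ) = (d : ℚ) * ((d : ℚ) - 1) / 2 := by
    have h3 : (d - 1) + 1 = d := Nat.succ_pred_eq_of_pos hd
    have hev : Even ((d - 1) * d) := by
      conv_rhs => rw [← h3]
      exact Nat.even_mul_succ_self (d - 1)
    have h2 : 2 ∣ d * (d - 1) := by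
      rw [mul_comm]
      exact hev.two_dvd
    have h4 : ((d * (d - 1) / 2 : ℕ) : ℚ) * 2 = (d : ℚ) * ((d : ℚ) - 1) := by
      rw [show ((2 : ℚ)) = ((2 : ℕ) : ℚ) from by norm_num, ← Nat.cast_mul,
        Nat.div_mul_cancel h2, Nat.cast_mul, Nat.cast_sub hd]
      norm_num
    linarith
  rw [← hc2]
  linarith [Q1, Q4, Q6]
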